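/- Fix L > 2π, and for k ∈ (0, k_L) define c(k) = L²/(L² - 16K(k)²√(1-k²+k⁴)), where k_L ∈ (0,1) is chosen so that L² - 16K(k)²√(1-k²+k⁴) > 0 on (0, k_L). Then c(k) > 1 for all k ∈ (0,k_L), c(k) → 1 + 4π²/(L²-4π²) as k → 0⁺, and hence the range of wave speeds is contained in (1 + 4π²/(L²-4π²), +∞). -/

import Mathlib

/-!
The admissible speeds of the stable cnoidal waves of the BBM equation with
period L > 2π: for k ∈ (0, k_L) (k_L chosen so that the denominator is
positive) the speed  c(k) = L²/(L² − 16K(k)²√(1−k²+k⁴))  satisfies c(k) > 1,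
c(k) → 1 + 4π²/(L²−4π²) as k → 0⁺, and c(k) > 1 + 4π²/(L²−4π²) throughout,
so the range of speeds is contained in (1 + 4π²/(L²−4π²), +∞).
Here K is the complete elliptic integral of the first kind.
-/

open MeasureTheory

/-- The complete elliptic integral of the first kind
`K(k) = ∫₀^{π/2} dθ/√(1 − k² sin²θ)`. -/
noncomputable def Kell (k : ℝ) : ℝ :=
  ∫ θ in (0:ℝ)..(Real.pi / 2), (Real.sqrt (1 - k ^ 2 * Real.sin θ ^ 2))⁻¹

/-- The cnoidal wave speed `c(k)`. -/
noncomputable def cBBM (L k : ℝ) : ℝ :=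
  L ^ 2 / (L ^ 2 - 16 * (Kell k) ^ 2 * Real.sqrt (1 - k ^ 2 + k ^ 4))

lemma arg_pos {k : ℝ} (hk1 : k ^ 2 < 1) (θ : ℝ) :
    0 < 1 - k ^ 2 * Real.sin θ ^ 2 := by
  nlinarith [Real.sin_sq_le_one θ, sq_nonneg k, sq_nonneg (Real.sin θ)]

lemma Kell_cont_integrand {k : ℝ} (hk1 : k ^ 2 < 1) :
    Continuous fun θ : ℝ => (Real.sqrt (1 - k ^ 2 * Real.sin θ ^ 2))⁻¹ := by
  apply Continuous.inv₀
  · exact Real.continuous_sqrt.comp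
      (continuous_const.sub (continuous_const.mul (Real.continuous_sin.pow 2)))
  · intro θ
    exact (Real.sqrt_pos.mpr (arg_pos hk1 θ)).ne'

lemma Kell_lower {k : ℝ} (hk1 : k ^ 2 < 1) :
    Real.pi / 2 * (1 + k ^ 2 / 4) ≤ Kell k := by
  have hpi := Real.pi_pos
  have h : (∫ θ in (0:ℝ)..(Real.pi/2), (1 + k ^ 2 / 2 * Real.sin θ ^ 2)) ≤ Kell k := by
    apply intervalIntegral.integral_mono_on (by positivity)
    · exact (continuous_const.add (continuous_const.mul
        (Real.continuous_sin.pow 2))).intervalIntegrable _ _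
    · exact (Kell_cont_integrand hk1).intervalIntegrable _ _
    · intro θ _
      set x : ℝ := k ^ 2 * Real.sin θ ^ 2 with hx
      have hx0 : 0 ≤ x := by positivity
      have hx1 : x < 1 := by
        have := arg_pos hk1 θ; linarith
      have hs : 0 < Real.sqrt (1 - x) := Real.sqrt_pos.mpr (by linarith)
      have hs2 : Real.sqrt (1 - x) ^ 2 = 1 - x := Real.sq_sqrt (by linarith)
      have key : (1 + x / 2) * Real.sqrt (1 - x) ≤ 1 := by
        nlinarith [sq_nonneg ((1 + x / 2) * Real.sqrt (1 - x) - 1),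
          sq_nonneg ((1 + x / 2) * Real.sqrt (1 - x) + 1), sq_nonneg x, hs.le,
          mul_nonneg (by linarith : (0:ℝ) ≤ 1 + x / 2) hs.le]
      have h2 : 1 + x / 2 ≤ 1 / Real.sqrt (1 - x) :=
        (le_div_iff₀ hs).mpr (by linarith)
      rw [one_div] at h2
      calc 1 + k ^ 2 / 2 * Real.sin θ ^ 2 = 1 + x / 2 := by rw [hx]; ring
        _ ≤ (Real.sqrt (1 - x))⁻¹ := h2
  calc Real.pi / 2 * (1 + k ^ 2 / 4)
      = ∫ θ in (0:ℝ)..(Real.pi/2), (1 + k ^ 2 / 2 * Real.sin θ ^ 2) := by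
        rw [intervalIntegral.integral_add (g := fun θ => k ^ 2 / 2 * Real.sin θ ^ 2)
          (intervalIntegrable_const)
          (((Real.continuous_sin.pow 2).intervalIntegrable _ _).const_mul _),
          intervalIntegral.integral_const_mul, integral_sin_sq]
        simp
        ring
    _ ≤ Kell k := h

lemma Kell_upper {k : ℝ} (hk1 : k ^ 2 < 1) :
    Kell k ≤ Real.pi / 2 * (Real.sqrt (1 - k ^ 2))⁻¹ := by
  have hpi := Real.pi_pos
  have hs : 0 < Real.sqrt (1 - k ^ 2) := Real.sqrt_pos.mpr (by linarith)
  have h : Kell k ≤ ∫ _θ in (0:ℝ)..(Real.pi/2), (Real.sqrt (1 - k ^ 2))⁻¹ := by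
    apply intervalIntegral.integral_mono_on (by positivity)
    · exact (Kell_cont_integrand hk1).intervalIntegrable _ _
    · exact intervalIntegrable_const
    · intro θ _
      have h1 : Real.sqrt (1 - k ^ 2) ≤ Real.sqrt (1 - k ^ 2 * Real.sin θ ^ 2) := by
        apply Real.sqrt_le_sqrt
        nlinarith [Real.sin_sq_le_one θ, sq_nonneg k]
      exact inv_anti₀ hs h1
  simpa [mul_comm] using h

lemma poly_key {t : ℝ} (ht : 0 < t) : 1 < (1 + t / 4) ^ 4 * (1 - t + t ^ 2) := by
  nlinarith [pow_pos ht 2, pow_pos ht 3, pow_pos ht 4, pow_pos ht 5, pow_pos ht 6]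


set_option maxHeartbeats 1000000 in
theorem bbm_speed_range (L kL : ℝ) (hL : 2 * Real.pi < L)
    (hkL : kL ∈ Set.Ioo (0:ℝ) 1)
    (hpos : ∀ k ∈ Set.Ioo (0:ℝ) kL,
      0 < L ^ 2 - 16 * (Kell k) ^ 2 * Real.sqrt (1 - k ^ 2 + k ^ 4)) :
    (∀ k ∈ Set.Ioo (0:ℝ) kL, 1 < cBBM L k) ∧
    Filter.Tendsto (cBBM L) (nhdsWithin 0 (Set.Ioo (0:ℝ) kL))
      (nhds (1 + 4 * Real.pi ^ 2 / (L ^ 2 - 4 * Real.pi ^ 2))) ∧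
    (∀ k ∈ Set.Ioo (0:ℝ) kL,
      1 + 4 * Real.pi ^ 2 / (L ^ 2 - 4 * Real.pi ^ 2) < cBBM L k) := by
  have hpi := Real.pi_pos
  have hL0 : 0 < L := lt_trans (by positivity) hL
  have hL4 : 0 < L ^ 2 - 4 * Real.pi ^ 2 := by nlinarith
  -- key strict bound on the denominator
  have hkey : ∀ k ∈ Set.Ioo (0:ℝ) kL,
      4 * Real.pi ^ 2 < 16 * (Kell k) ^ 2 * Real.sqrt (1 - k ^ 2 + k ^ 4) := by
    intro k hk
    have hk0 : 0 < k := hk.1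
    have hk1 : k ^ 2 < 1 := by nlinarith [hk.2, hkL.2]
    have hq : 0 < 1 - k ^ 2 + k ^ 4 := by nlinarith [sq_nonneg (k ^ 2 - 1)]
    set s := Real.sqrt (1 - k ^ 2 + k ^ 4) with hsdef
    have hs : 0 < s := Real.sqrt_pos.mpr hq
    have hs2 : s ^ 2 = 1 - k ^ 2 + k ^ 4 := Real.sq_sqrt hq.le
    have hKl := Kell_lower hk1
    have hm : 0 < Real.pi / 2 * (1 + k ^ 2 / 4) := by positivity
    have hK2 : (Real.pi / 2 * (1 + k ^ 2 / 4)) ^ 2 ≤ (Kell k) ^ 2 :=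
      pow_le_pow_left₀ hm.le hKl 2
    have ht : 0 < k ^ 2 := by positivity
    have hp := poly_key ht
    have hA0 : 0 < (1 + k ^ 2 / 4) ^ 2 * s := mul_pos (by positivity) hs
    have hA2 : 1 < ((1 + k ^ 2 / 4) ^ 2 * s) ^ 2 := by
      rw [mul_pow, hs2]; nlinarith [hp]
    have h1 : 1 < (1 + k ^ 2 / 4) ^ 2 * s := by nlinarith [hA0, hA2]
    have h2 : 4 * Real.pi ^ 2 < 16 * ((Real.pi / 2 * (1 + k ^ 2 / 4)) ^ 2) * s := by
      nlinarith [mul_lt_mul_of_pos_left h1 (by positivity : (0:ℝ) < 4 * Real.pi ^ 2)]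
    have h3 : 16 * ((Real.pi / 2 * (1 + k ^ 2 / 4)) ^ 2) * s ≤ 16 * (Kell k) ^ 2 * s := by
      nlinarith
    linarith
  refine ⟨?_, ?_, ?_⟩
  · intro k hk
    have hD := hpos k hk
    have hk1 : k ^ 2 < 1 := by nlinarith [hk.1, hk.2, hkL.2]
    have h := hkey k hk
    rw [cBBM, lt_div_iff₀ hD]
    nlinarith
  · -- limit
    have hKlim : Filter.Tendsto Kell (nhdsWithin 0 (Set.Ioo (0:ℝ) kL))
        (nhds (Real.pi / 2)) := by
      refine tendsto_of_tendsto_of_tendsto_of_le_of_le'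
        (g := fun _ : ℝ => Real.pi / 2)
        (h := fun k : ℝ => Real.pi / 2 * (Real.sqrt (1 - k ^ 2))⁻¹)
        tendsto_const_nhds ?_ ?_ ?_
      · have hc : ContinuousAt (fun k : ℝ => Real.pi / 2 * (Real.sqrt (1 - k ^ 2))⁻¹) 0 := by
          apply ContinuousAt.mul continuousAt_const
          apply ContinuousAt.inv₀
          · exact (Real.continuous_sqrt.comp
              (continuous_const.sub (continuous_pow 2))).continuousAt
          · simp
        have := hc.tendsto
        simp only [ne_eq, OfNat.ofNat_ne_zero, not_false_eq_true, zero_pow, sub_zero,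
          Real.sqrt_one, inv_one, mul_one] at this
        exact this.mono_left nhdsWithin_le_nhds
      · filter_upwards [self_mem_nhdsWithin] with k hk
        have hk1 : k ^ 2 < 1 := by nlinarith [hk.1, hk.2, hkL.2]
        have := Kell_lower hk1
        nlinarith [sq_nonneg k, Real.pi_pos]
      · filter_upwards [self_mem_nhdsWithin] with k hk
        have hk1 : k ^ 2 < 1 := by nlinarith [hk.1, hk.2, hkL.2]
        exact Kell_upper hk1
    have hslim : Filter.Tendsto (fun k : ℝ => Real.sqrt (1 - k ^ 2 + k ^ 4))
        (nhdsWithin 0 (Set.Ioo (0:ℝ) kL)) (nhds 1) := by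
      have hc : ContinuousAt (fun k : ℝ => Real.sqrt (1 - k ^ 2 + k ^ 4)) 0 :=
        (Real.continuous_sqrt.comp
          ((continuous_const.sub (continuous_pow 2)).add (continuous_pow 4))).continuousAt
      have := hc.tendsto
      simp only [ne_eq, OfNat.ofNat_ne_zero, not_false_eq_true, zero_pow, sub_zero,
        add_zero, Real.sqrt_one] at this
      exact this.mono_left nhdsWithin_le_nhds
    have hDlim : Filter.Tendsto
        (fun k => L ^ 2 - 16 * (Kell k) ^ 2 * Real.sqrt (1 - k ^ 2 + k ^ 4))
        (nhdsWithin 0 (Set.Ioo (0:ℝ) kL)) (nhds (L ^ 2 - 4 * Real.pi ^ 2)) := by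
      have : Filter.Tendsto
          (fun k => 16 * (Kell k) ^ 2 * Real.sqrt (1 - k ^ 2 + k ^ 4))
          (nhdsWithin 0 (Set.Ioo (0:ℝ) kL)) (nhds (16 * (Real.pi / 2) ^ 2 * 1)) :=
        ((hKlim.pow 2).const_mul 16).mul hslim
      have h16 : 16 * (Real.pi / 2) ^ 2 * 1 = 4 * Real.pi ^ 2 := by ring
      rw [h16] at this
      exact tendsto_const_nhds.sub this
    have hclim : Filter.Tendsto (cBBM L) (nhdsWithin 0 (Set.Ioo (0:ℝ) kL))
        (nhds (L ^ 2 / (L ^ 2 - 4 * Real.pi ^ 2))) :=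
      tendsto_const_nhds.div hDlim hL4.ne'
    have heq : L ^ 2 / (L ^ 2 - 4 * Real.pi ^ 2)
        = 1 + 4 * Real.pi ^ 2 / (L ^ 2 - 4 * Real.pi ^ 2) := by
      field_simp
      ring
    rwa [heq] at hclim
  · intro k hk
    have hD := hpos k hk
    have h := hkey k hk
    have hDlt : L ^ 2 - 16 * (Kell k) ^ 2 * Real.sqrt (1 - k ^ 2 + k ^ 4)
        < L ^ 2 - 4 * Real.pi ^ 2 := by linarith
    have := div_lt_div_of_pos_left (by positivity : (0:ℝ) < L ^ 2) hD hDlt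
    have heq : L ^ 2 / (L ^ 2 - 4 * Real.pi ^ 2)
        = 1 + 4 * Real.pi ^ 2 / (L ^ 2 - 4 * Real.pi ^ 2) := by
      field_simp
      ring
    rw [cBBM]
    linarith [this, heq ▸ this]
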